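/- Language-Thought Gap lower bound: Let p ∈ [0,1], and let P, R be probability mass functions on a finite set S. Define Q(a) = p·P(a) + (1-p)·R(a). Assume Q(a) > 0 whenever P(a) > 0. Then D_KL(P‖Q) ≥ ((1−p)²/2) · V(P,R)², where V(P,R) = Σ_a |P(a) − R(a)|. -/

import Mathlib

open Real Finset

private lemma mono_logaux : MonotoneOn (fun x : ℝ => Real.log x + 4 / (x + 1)) (Set.Ioi 0) := by
  have hd : ∀ x ∈ Set.Ioi (0:ℝ), HasDerivAt (fun x : ℝ => Real.log x + 4 / (x + 1))
      (x⁻¹ + (0 * (x + 1) - 4 * 1) / (x + 1) ^ 2) x := by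
    intro x hx
    have hx : (0:ℝ) < x := hx
    have h1 : x + 1 ≠ 0 := by linarith
    exact (Real.hasDerivAt_log hx.ne').add
      ((hasDerivAt_const x (4:ℝ)).div ((hasDerivAt_id x).add_const 1) h1)
  apply monotoneOn_of_hasDerivWithinAt_nonneg (convex_Ioi 0)
    (fun x hx => ((hd x hx).continuousAt).continuousWithinAt)
    (f' := fun x => x⁻¹ + (0 * (x + 1) - 4 * 1) / (x + 1) ^ 2)
    (fun x hx => ((hd x (by rwa [interior_Ioi] at hx)).hasDerivWithinAt))
  intro x hx
  rw [interior_Ioi] at hx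
  have hx : (0:ℝ) < x := hx
  have h1 : (0:ℝ) < x + 1 := by linarith
  have key : x⁻¹ + (0 * (x + 1) - 4 * 1) / (x + 1) ^ 2 = (x - 1)^2 / (x * (x+1)^2) := by
    field_simp; ring
  rw [key]
  positivity

private lemma log_ge {x : ℝ} (hx : 1 ≤ x) : 2 * (x - 1) / (x + 1) ≤ Real.log x := by
  have h0 : (0:ℝ) < x := by linarith
  have := mono_logaux (Set.mem_Ioi.2 one_pos) (Set.mem_Ioi.2 h0) hx
  simp only [Real.log_one] at this
  have h1 : x + 1 ≠ 0 := by linarith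
  have e : 2 * (x - 1) / (x + 1) = 2 - 4 / (x + 1) := by field_simp; ring
  rw [e]; norm_num at this; linarith

private lemma log_le {x : ℝ} (h0 : 0 < x) (hx : x ≤ 1) : Real.log x ≤ 2 * (x - 1) / (x + 1) := by
  have := mono_logaux (Set.mem_Ioi.2 h0) (Set.mem_Ioi.2 one_pos) hx
  simp only [Real.log_one] at this
  have h1 : x + 1 ≠ 0 := by linarith
  have e : 2 * (x - 1) / (x + 1) = 2 - 4 / (x + 1) := by field_simp; ring
  rw [e]; norm_num at this; linarith



private noncomputable def gfun : ℝ → ℝ :=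
  fun t => t * Real.log t - t + 1 - 3/2 * ((t - 1)^2 / (t + 2))

private lemma gfun_deriv (t : ℝ) (ht : 0 < t) :
    HasDerivAt gfun
      (Real.log t - 3/2 * ((2 * (t-1) * (t+2) - (t-1)^2) / (t+2)^2)) t := by
  have h2 : t + 2 ≠ 0 := by linarith
  have h1 : HasDerivAt (fun t : ℝ => t * Real.log t) (1 * Real.log t + t * t⁻¹) t :=
    (hasDerivAt_id t).mul (Real.hasDerivAt_log ht.ne')
  have h3 : HasDerivAt (fun t : ℝ => (t - 1)^2) (2 * (t - 1) ^ 1 * 1) t := by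
    simpa using (((hasDerivAt_id t).sub_const 1).fun_pow 2)
  have h4 : HasDerivAt (fun t : ℝ => (t - 1)^2 / (t + 2))
      ((2 * (t - 1) ^ 1 * 1 * (t + 2) - (t - 1)^2 * 1) / (t + 2)^2) t :=
    h3.div ((hasDerivAt_id t).add_const 2) h2
  have h5 := ((h1.sub (hasDerivAt_id t)).add_const 1).sub (h4.const_mul (3/2))
  refine h5.congr_deriv ?_
  have : t * t⁻¹ = 1 := mul_inv_cancel₀ ht.ne'
  rw [this]; ring

private lemma gfun_nonneg {t : ℝ} (ht : 0 < t) : 0 ≤ gfun t := by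
  have hg1 : gfun 1 = 0 := by simp [gfun]
  rcases le_total 1 t with h | h
  · have hmono : MonotoneOn gfun (Set.Ici 1) := by
      apply monotoneOn_of_hasDerivWithinAt_nonneg (convex_Ici 1)
        (fun x hx => ((gfun_deriv x (by simp at hx; linarith)).continuousAt).continuousWithinAt)
        (f' := fun t => Real.log t - 3/2 * ((2 * (t-1) * (t+2) - (t-1)^2) / (t+2)^2))
        (fun x hx => (gfun_deriv x (by rw [interior_Ici] at hx; simp at hx; linarith)).hasDerivWithinAt)
      intro x hx
      rw [interior_Ici] at hx
      have hx1 : (1:ℝ) < x := hx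
      have hlog := log_ge hx1.le
      have e : 2 * (x - 1) / (x + 1) - 3/2 * ((2 * (x-1) * (x+2) - (x-1)^2) / (x+2)^2)
          = (x-1)^3 / (2 * (x+1) * (x+2)^2) := by
        field_simp
        ring
      have hpos : 0 ≤ (x-1)^3 / (2 * (x+1) * (x+2)^2) := by
        apply div_nonneg (by nlinarith) (by positivity)
      linarith [e ▸ hpos]
    have := hmono (Set.mem_Ici.2 le_rfl) (Set.mem_Ici.2 h) h
    linarith [hg1 ▸ this]
  · have hanti : AntitoneOn gfun (Set.Ioc 0 1) := by
      apply antitoneOn_of_hasDerivWithinAt_nonpos (convex_Ioc 0 1)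
        (fun x hx => ((gfun_deriv x hx.1).continuousAt).continuousWithinAt)
        (f' := fun t => Real.log t - 3/2 * ((2 * (t-1) * (t+2) - (t-1)^2) / (t+2)^2))
        (fun x hx => (gfun_deriv x (by rw [interior_Ioc] at hx; exact hx.1)).hasDerivWithinAt)
      intro x hx
      rw [interior_Ioc] at hx
      obtain ⟨hx0, hx1⟩ := hx
      have hlog := log_le hx0 hx1.le
      have e : 2 * (x - 1) / (x + 1) - 3/2 * ((2 * (x-1) * (x+2) - (x-1)^2) / (x+2)^2)
          = (x-1)^3 / (2 * (x+1) * (x+2)^2) := by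
        field_simp
        ring
      have hneg : (x-1)^3 / (2 * (x+1) * (x+2)^2) ≤ 0 := by
        apply div_nonpos_of_nonpos_of_nonneg
        · nlinarith
        · positivity
      linarith [e ▸ hneg]
    have := hanti (Set.mem_Ioc.2 ⟨ht, h⟩) (Set.mem_Ioc.2 ⟨one_pos, le_rfl⟩) h
    linarith [hg1 ▸ this]

private lemma key_scalar {t : ℝ} (ht : 0 < t) :
    3/2 * ((t - 1)^2 / (t + 2)) ≤ t * Real.log t - t + 1 := by
  have := gfun_nonneg ht
  unfold gfun at this
  linarith



private lemma key_two (x y : ℝ) (hx : 0 ≤ x) (hy : 0 ≤ y) (h : 0 < x → 0 < y) :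
    x - y + 3/2 * ((x - y)^2 / (x + 2*y)) ≤ x * Real.log (x / y) := by
  rcases hx.eq_or_lt with hx0 | hx0
  · rcases hy.eq_or_lt with hy0 | hy0
    · simp [← hx0, ← hy0]
    · rw [← hx0]
      have e : ((0:ℝ) - y)^2 / ((0:ℝ) + 2*y) = y / 2 := by
        field_simp; ring
      rw [e]; simp; linarith
  · have hy0 : 0 < y := h hx0
    have ht : 0 < x / y := div_pos hx0 hy0
    have hk := key_scalar ht
    have hk2 := mul_le_mul_of_nonneg_left hk hy0.le
    have e1 : y * (x / y * Real.log (x / y) - x / y + 1) = x * Real.log (x / y) - x + y := by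
      field_simp
    have hxy : x + 2*y ≠ 0 := by linarith
    have e2 : y * (3/2 * ((x / y - 1)^2 / (x / y + 2))) = 3/2 * ((x - y)^2 / (x + 2*y)) := by
      have hd : x / y + 2 = (x + 2*y)/y := by field_simp
      have hs : x / y - 1 = (x - y)/y := by field_simp
      rw [hd, hs, div_pow, div_div_div_eq]
      field_simp
    rw [e1, e2] at hk2
    linarith

theorem language_thought_gap {S : Type*} [Fintype S] (p : ℝ) (hp0 : 0 ≤ p) (hp1 : p ≤ 1)
    (P R : S → ℝ)
    (hP0 : ∀ a, 0 ≤ P a) (hP1 : ∑ a, P a = 1)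
    (hR0 : ∀ a, 0 ≤ R a) (hR1 : ∑ a, R a = 1)
    (Q : S → ℝ) (hQ : ∀ a, Q a = p * P a + (1 - p) * R a)
    (habs : ∀ a, 0 < P a → 0 < Q a) :
    ∑ a ∈ Finset.univ.filter (fun a => 0 < P a), P a * Real.log (P a / Q a) ≥
      ((1 - p) ^ 2 / 2) * (∑ a, |P a - R a|) ^ 2 := by
  have hQ0 : ∀ a, 0 ≤ Q a := fun a => by
    rw [hQ]; have := hP0 a; have := hR0 a; nlinarith
  have hQ1 : ∑ a, Q a = 1 := by
    simp_rw [hQ]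
    rw [Finset.sum_add_distrib, ← Finset.mul_sum, ← Finset.mul_sum, hP1, hR1]; ring
  -- filtered sum equals full sum
  have hfilter : ∑ a ∈ Finset.univ.filter (fun a => 0 < P a), P a * Real.log (P a / Q a)
      = ∑ a, P a * Real.log (P a / Q a) := by
    apply Finset.sum_filter_of_ne
    intro a _ hne
    rcases (hP0 a).eq_or_lt with h | h
    · exact absurd (by rw [← h]; ring) hne
    · exact h
  -- pointwise bound summed
  have hpt : ∑ a, (P a - Q a + 3/2 * ((P a - Q a)^2 / (P a + 2 * Q a)))
      ≤ ∑ a, P a * Real.log (P a / Q a) :=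
    Finset.sum_le_sum fun a _ => key_two (P a) (Q a) (hP0 a) (hQ0 a) (habs a)
  have hsplit : ∑ a, (P a - Q a + 3/2 * ((P a - Q a)^2 / (P a + 2 * Q a)))
      = 3/2 * ∑ a, (P a - Q a)^2 / (P a + 2 * Q a) := by
    rw [Finset.sum_add_distrib, Finset.sum_sub_distrib, hP1, hQ1, ← Finset.mul_sum]; ring
  -- Cauchy-Schwarz
  have hCS : (∑ a, |P a - Q a|) ^ 2
      ≤ (∑ a, (P a + 2 * Q a)) * ∑ a, (P a - Q a)^2 / (P a + 2 * Q a) := by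
    apply Finset.sum_sq_le_sum_mul_sum_of_sq_eq_mul
    · intro i _; have := hP0 i; have := hQ0 i; linarith
    · intro i _; exact div_nonneg (sq_nonneg _) (by have := hP0 i; have := hQ0 i; linarith)
    · intro i _
      rcases eq_or_lt_of_le (by have := hP0 i; have := hQ0 i; linarith :
          (0:ℝ) ≤ P i + 2 * Q i) with h | h
      · have hPi : P i = 0 := by have := hP0 i; have := hQ0 i; linarith
        have hQi : Q i = 0 := by have := hP0 i; have := hQ0 i; linarith
        simp [hPi, hQi]
      · rw [sq_abs, mul_comm, div_mul_cancel₀ _ h.ne']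
  have hsum3 : ∑ a, (P a + 2 * Q a) = 3 := by
    rw [Finset.sum_add_distrib, hP1, ← Finset.mul_sum, hQ1]; norm_num
  -- |P - Q| = (1-p)|P - R|
  have habs2 : ∑ a, |P a - Q a| = (1 - p) * ∑ a, |P a - R a| := by
    rw [Finset.mul_sum]
    apply Finset.sum_congr rfl
    intro a _
    rw [hQ, show P a - (p * P a + (1 - p) * R a) = (1 - p) * (P a - R a) by ring,
      abs_mul, abs_of_nonneg (by linarith : (0:ℝ) ≤ 1 - p)]
  rw [ge_iff_le, hfilter]
  have hT : 0 ≤ ∑ a, (P a - Q a)^2 / (P a + 2 * Q a) :=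
    Finset.sum_nonneg fun a _ => div_nonneg (sq_nonneg _)
      (by have := hP0 a; have := hQ0 a; linarith)
  rw [hsum3] at hCS
  rw [habs2] at hCS
  have : ((1 - p) * ∑ a, |P a - R a|) ^ 2 = (1 - p)^2 * (∑ a, |P a - R a|) ^ 2 := by ring
  rw [this] at hCS
  nlinarith [hpt, hsplit, hCS]
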